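/- Let X be a countable alphabet, p a probability distribution on X, and X_1,...,X_n i.i.d. samples from p with empirical estimator p̂_u = #{i ≤ n : X_i = u}/n. Let m be a positive even integer, d = m/2, and let c_{k,m,n} (1 ≤ k ≤ d) be real coefficients satisfying the binomial central-moment identity. Then E[ (sup_{u∈X} |p_u − p̂_u|)^m ] ≤ n^{−m} Σ_{u∈X} Σ_{k=1}^{d} c_{k,m,n} (p_u(1−p_u))^k. -/

import Mathlib

open MeasureTheory ProbabilityTheory Finset

/-- The empirical (maximum likelihood) estimator `p̂_u = #{i ≤ n : X_i = u} / n`. -/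
noncomputable def emp {𝒳 : Type*} [DecidableEq 𝒳] {Ω : Type*} {n : ℕ}
    (X : Fin n → Ω → 𝒳) (ω : Ω) (u : 𝒳) : ℝ :=
  ((Finset.univ.filter (fun i => X i ω = u)).card : ℝ) / n

/-- The coefficients `c k` (for `1 ≤ k ≤ d`) satisfy the binomial central-moment identity:
for every `θ ∈ [0,1]` and `Y ~ Bin(n, θ)`,
`E[(Y - nθ)^m] = ∑_{k=1}^d c k (θ(1-θ))^k`. -/
def MomentIdentity (n m d : ℕ) (c : ℕ → ℝ) : Prop :=
  ∀ θ : ℝ, θ ∈ Set.Icc (0:ℝ) 1 →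
    ∑ y ∈ Finset.range (n+1),
        (n.choose y : ℝ) * θ^y * (1-θ)^(n-y) * ((y:ℝ) - n*θ)^m
      = ∑ k ∈ Finset.Icc 1 d, c k * (θ*(1-θ))^k

/-- The count `N_u = #{i : X_i = u}` is binomially distributed. -/
lemma meas_count_eq {𝒳 : Type*} [DecidableEq 𝒳] [MeasurableSpace 𝒳] [MeasurableSingletonClass 𝒳]
    {Ω : Type*} [MeasureSpace Ω] [IsProbabilityMeasure (ℙ : Measure Ω)]
    {n : ℕ} (X : Fin n → Ω → 𝒳) (hmeas : ∀ i, Measurable (X i))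
    (hindep : iIndepFun X ℙ)
    (u : 𝒳) (pu : ℝ) (hpu0 : 0 ≤ pu) (hpu1 : pu ≤ 1)
    (hdist : ∀ i, (ℙ {ω | X i ω = u}).toReal = pu) (y : ℕ) :
    ℙ {ω | (Finset.univ.filter (fun i => X i ω = u)).card = y}
      = ENNReal.ofReal ((n.choose y : ℝ) * pu ^ y * (1 - pu)^(n-y)) := by
  have hXm : ∀ i : Fin n, ℙ {ω | X i ω = u} = ENNReal.ofReal pu := by
    intro i
    rw [← hdist i, ENNReal.ofReal_toReal (measure_ne_top _ _)]
  have hXc : ∀ i : Fin n, ℙ ({ω | X i ω = u}ᶜ) = ENNReal.ofReal (1 - pu) := by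
    intro i
    have hms : MeasurableSet {ω | X i ω = u} := (hmeas i) (measurableSet_singleton u)
    rw [measure_compl hms (measure_ne_top _ _), measure_univ, hXm i,
      ENNReal.ofReal_sub _ hpu0, ENNReal.ofReal_one]
  -- decompose the event
  have hdecomp : {ω | (Finset.univ.filter (fun i => X i ω = u)).card = y}
      = ⋃ S ∈ Finset.powersetCard y (Finset.univ : Finset (Fin n)),
          {ω | Finset.univ.filter (fun i => X i ω = u) = S} := by
    ext ω
    simp only [Set.mem_setOf_eq, Set.mem_iUnion, Finset.mem_powersetCard_univ]
    constructor
    · intro h; exact ⟨_, h, rfl⟩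
    · rintro ⟨S, hS, h⟩; rw [h]; exact hS
  have hEeq : ∀ S : Finset (Fin n),
      {ω | Finset.univ.filter (fun i => X i ω = u) = S}
        = ⋂ i, X i ⁻¹' (if i ∈ S then {u} else {u}ᶜ) := by
    intro S
    ext ω
    simp only [Set.mem_setOf_eq, Set.mem_iInter, Set.mem_preimage, Finset.ext_iff,
      Finset.mem_filter, Finset.mem_univ, true_and]
    refine forall_congr' fun i => ?_
    by_cases hiS : i ∈ S <;> simp [hiS]
  have hEmeas : ∀ S : Finset (Fin n), MeasurableSet
      {ω | Finset.univ.filter (fun i => X i ω = u) = S} := by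
    intro S
    rw [hEeq S]
    refine MeasurableSet.iInter fun i => (hmeas i) ?_
    by_cases hiS : i ∈ S <;> simp [hiS, (measurableSet_singleton u), (measurableSet_singleton u).compl]
  have hEprob : ∀ S ∈ Finset.powersetCard y (Finset.univ : Finset (Fin n)),
      ℙ {ω | Finset.univ.filter (fun i => X i ω = u) = S}
        = ENNReal.ofReal (pu ^ y * (1 - pu) ^ (n - y)) := by
    intro S hS
    rw [Finset.mem_powersetCard_univ] at hS
    rw [hEeq S]
    have hcomap : ∀ i : Fin n, MeasurableSet[MeasurableSpace.comap (X i) inferInstance]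
        (X i ⁻¹' (if i ∈ S then {u} else {u}ᶜ)) := fun i =>
      ⟨if i ∈ S then {u} else {u}ᶜ, by
        by_cases hiS : i ∈ S <;>
          simp [hiS, measurableSet_singleton u, (measurableSet_singleton u).compl], rfl⟩
    rw [hindep.meas_iInter hcomap]
    have : ∀ i : Fin n, ℙ (X i ⁻¹' (if i ∈ S then {u} else {u}ᶜ))
        = if i ∈ S then ENNReal.ofReal pu else ENNReal.ofReal (1 - pu) := by
      intro i
      by_cases hiS : i ∈ S
      · simp only [hiS, if_true]
        rw [← hXm i]; rfl
      · simp only [hiS, if_false]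
        rw [show X i ⁻¹' ({u}ᶜ : Set 𝒳) = {ω | X i ω = u}ᶜ from rfl, hXc i]
    simp_rw [this]
    rw [Finset.prod_ite, Finset.prod_const, Finset.prod_const]
    have h1 : (Finset.univ.filter (fun x : Fin n => x ∈ S)).card = y := by
      rw [Finset.filter_univ_mem]; exact hS
    have h2 : (Finset.univ.filter (fun x : Fin n => ¬ x ∈ S)).card = n - y := by
      have := Finset.card_filter_add_card_filter_not (s := (Finset.univ : Finset (Fin n)))
        (p := fun x => x ∈ S)
      simp only [Finset.card_univ, Fintype.card_fin] at this
      omega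
    rw [h1, h2, ← ENNReal.ofReal_pow hpu0, ← ENNReal.ofReal_pow (by linarith),
      ← ENNReal.ofReal_mul (by positivity)]
  rw [hdecomp, measure_biUnion_finset ?_ (fun S _ => hEmeas S)]
  · rw [Finset.sum_congr rfl hEprob, Finset.sum_const, Finset.card_powersetCard,
      Finset.card_univ, Fintype.card_fin, nsmul_eq_mul]
    rw [← ENNReal.ofReal_natCast, ← ENNReal.ofReal_mul (by positivity), mul_assoc]
  · intro S hS T hT hST
    refine Set.disjoint_left.2 fun ω hωS hωT => hST ?_
    simp only [Set.mem_setOf_eq] at hωS hωT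
    rw [← hωS, ← hωT]

/-- Integral of a function of a bounded `ℕ`-valued random variable. -/
lemma integral_comp_count {Ω : Type*} [MeasureSpace Ω] [IsProbabilityMeasure (ℙ : Measure Ω)]
    {n : ℕ} (N : Ω → ℕ) (hN : Measurable N) (hNle : ∀ ω, N ω ≤ n) (φ : ℕ → ℝ) :
    ∫ ω, φ (N ω) ∂ℙ = ∑ y ∈ Finset.range (n+1), (ℙ {ω | N ω = y}).toReal * φ y := by
  have hms : ∀ y : ℕ, MeasurableSet {ω | N ω = y} := fun y => hN (measurableSet_singleton y)
  have hpt : ∀ ω, φ (N ω) = ∑ y ∈ Finset.range (n+1),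
      Set.indicator {ω' | N ω' = y} (fun _ => φ y) ω := by
    intro ω
    rw [Finset.sum_eq_single (N ω)]
    · exact (Set.indicator_of_mem rfl _).symm
    · intro y _ hne
      exact Set.indicator_of_notMem (by simpa using (Ne.symm hne)) _
    · intro h; exact absurd (Finset.mem_range.2 (Nat.lt_succ_of_le (hNle ω))) h
  simp_rw [hpt]
  rw [integral_finset_sum]
  · refine Finset.sum_congr rfl fun y _ => ?_
    rw [integral_indicator_const _ (hms y), smul_eq_mul, measureReal_def]
  · intro y _
    exact (integrable_const (φ y)).indicator (hms y)

lemma count_measurable {𝒳 : Type*} [DecidableEq 𝒳] [MeasurableSpace 𝒳]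
    [MeasurableSingletonClass 𝒳] {Ω : Type*} [MeasurableSpace Ω]
    {n : ℕ} (X : Fin n → Ω → 𝒳) (hmeas : ∀ i, Measurable (X i)) (u : 𝒳) :
    Measurable (fun ω => (Finset.univ.filter (fun i => X i ω = u)).card) := by
  have : (fun ω => (Finset.univ.filter (fun i => X i ω = u)).card)
      = fun ω => ∑ i : Fin n, if X i ω = u then 1 else 0 := by
    funext ω; rw [Finset.card_filter]
  rw [this]
  exact Finset.measurable_sum _ fun i _ =>
    Measurable.ite (hmeas i (measurableSet_singleton u)) measurable_const measurable_const

/-- The `m`-th central moment of the empirical estimator at a single point `u`. -/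
lemma per_u {𝒳 : Type*} [DecidableEq 𝒳] [MeasurableSpace 𝒳] [MeasurableSingletonClass 𝒳]
    {Ω : Type*} [MeasureSpace Ω] [IsProbabilityMeasure (ℙ : Measure Ω)]
    {n : ℕ} (hn : 1 ≤ n) (X : Fin n → Ω → 𝒳) (hmeas : ∀ i, Measurable (X i))
    (hindep : iIndepFun X ℙ)
    (u : 𝒳) (pu : ℝ) (hpu0 : 0 ≤ pu) (hpu1 : pu ≤ 1)
    (hdist : ∀ i, (ℙ {ω | X i ω = u}).toReal = pu)
    {m : ℕ} (hm : Even m) {d : ℕ} (c : ℕ → ℝ) (hc : MomentIdentity n m d c) :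
    ∫ ω, |pu - emp X ω u| ^ m ∂ℙ
      = (1/(n:ℝ)^m) * ∑ k ∈ Finset.Icc 1 d, c k * (pu*(1-pu))^k := by
  have hn0 : (n:ℝ) ≠ 0 := Nat.cast_ne_zero.2 (by omega)
  set N : Ω → ℕ := fun ω => (Finset.univ.filter (fun i => X i ω = u)).card with hN
  have hNle : ∀ ω, N ω ≤ n := fun ω =>
    (Finset.card_filter_le _ _).trans (by simp)
  have hpt : ∀ ω, |pu - emp X ω u| ^ m
      = ((N ω : ℝ) - n * pu)^m * (1/(n:ℝ)^m) := by
    intro ω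
    have : pu - emp X ω u = -(((N ω : ℝ) - n * pu) / n) := by
      rw [emp]; field_simp; ring
    rw [this, abs_neg, abs_div, Nat.abs_cast, div_pow, hm.pow_abs, div_eq_mul_one_div]
  simp_rw [hpt]
  rw [integral_mul_const, mul_comm]
  congr 1
  rw [integral_comp_count N (count_measurable X hmeas u) hNle
    (fun y => ((y:ℝ) - n * pu)^m)]
  rw [← hc pu ⟨hpu0, hpu1⟩]
  refine Finset.sum_congr rfl fun y _ => ?_
  rw [meas_count_eq X hmeas hindep u pu hpu0 hpu1 hdist y,
    ENNReal.toReal_ofReal (mul_nonneg (mul_nonneg (Nat.cast_nonneg _)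
      (pow_nonneg hpu0 _)) (pow_nonneg (by linarith) _))]

/-- **Moment bound for the sup-norm deviation.**
`E[ (sup_u |p_u - p̂_u|)^m ] ≤ n^{-m} ∑_u ∑_{k=1}^{m/2} c_{k,m,n} (p_u(1-p_u))^k`. -/
theorem supNorm_central_moment_bound
    {𝒳 : Type*} [Countable 𝒳] [DecidableEq 𝒳]
    [MeasurableSpace 𝒳] [MeasurableSingletonClass 𝒳]
    {Ω : Type*} [MeasureSpace Ω] [IsProbabilityMeasure (ℙ : Measure Ω)]
    (p : 𝒳 → ℝ) (hp0 : ∀ u, 0 ≤ p u) (hp1 : ∑' u, p u = 1)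
    (n : ℕ) (hn : 1 ≤ n)
    (X : Fin n → Ω → 𝒳) (hmeas : ∀ i, Measurable (X i))
    (hindep : iIndepFun X ℙ)
    (hdist : ∀ i u, (ℙ {ω | X i ω = u}).toReal = p u)
    (m : ℕ) (hm : Even m) (hm0 : 0 < m) (d : ℕ) (hd : d = m / 2)
    (c : ℕ → ℝ) (hc : MomentIdentity n m d c) :
    ∫ ω, (⨆ u, |p u - emp X ω u|) ^ m ∂ℙ ≤
      (1/(n:ℝ)^m) * ∑' u, ∑ k ∈ Finset.Icc 1 d, c k * (p u * (1 - p u))^k := by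
  have hnR : (0:ℝ) < (n:ℝ) := by exact_mod_cast hn
  have hsummable : Summable p := by
    by_contra h
    rw [tsum_eq_zero_of_not_summable h] at hp1
    norm_num at hp1
  have hple : ∀ u, p u ≤ 1 := by
    intro u
    rw [← hp1]
    exact Summable.le_tsum hsummable u fun v _ => hp0 v
  have hempnn : ∀ ω u, 0 ≤ emp X ω u := fun ω u => by
    rw [emp]; positivity
  have hemple : ∀ ω u, emp X ω u ≤ 1 := by
    intro ω u
    rw [emp, div_le_one hnR]
    exact_mod_cast (Finset.card_filter_le _ _).trans (by simp)
  set f : 𝒳 → Ω → ℝ := fun u ω => |p u - emp X ω u| ^ m with hf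
  have habs_le : ∀ ω u, |p u - emp X ω u| ≤ 1 := by
    intro ω u
    rw [abs_sub_le_iff]
    constructor <;> [linarith [hempnn ω u, hple u]; linarith [hemple ω u, hp0 u]]
  have hf01 : ∀ u ω, 0 ≤ f u ω ∧ f u ω ≤ 1 := fun u ω =>
    ⟨pow_nonneg (abs_nonneg _) _, pow_le_one₀ (abs_nonneg _) (habs_le ω u)⟩
  have hempmeas : ∀ u, Measurable fun ω => emp X ω u := by
    intro u
    simp only [emp]
    exact (measurable_from_nat.comp (count_measurable X hmeas u)).div_const _
  have hfmeas : ∀ u, Measurable (f u) := fun u =>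
    ((measurable_const.sub (hempmeas u)).abs.pow_const m)
  have hfint : ∀ u, Integrable (f u) := by
    intro u
    refine ⟨(hfmeas u).aestronglyMeasurable,
      HasFiniteIntegral.of_bounded (C := 1) (ae_of_all _ fun ω => ?_)⟩
    rw [Real.norm_eq_abs, abs_of_nonneg (hf01 u ω).1]
    exact (hf01 u ω).2
  set S : 𝒳 → ℝ := fun u => ∑ k ∈ Finset.Icc 1 d, c k * (p u * (1 - p u))^k with hS
  have hint : ∀ u, ∫ ω, f u ω ∂ℙ = (1/(n:ℝ)^m) * S u := fun u =>
    per_u hn X hmeas hindep u (p u) (hp0 u) (hple u) (fun i => hdist i u) hm c hc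
  have hnm : (0:ℝ) < 1/(n:ℝ)^m := by positivity
  have hSnn : ∀ u, 0 ≤ S u := by
    intro u
    have h1 : 0 ≤ ∫ ω, f u ω ∂ℙ := integral_nonneg fun ω => (hf01 u ω).1
    rw [hint u] at h1
    nlinarith
  have hSle : ∀ u, S u ≤ (∑ k ∈ Finset.Icc 1 d, |c k|) * p u := by
    intro u
    rw [hS, Finset.sum_mul]
    refine Finset.sum_le_sum fun k hk => ?_
    have hk1 : 1 ≤ k := (Finset.mem_Icc.1 hk).1
    have h01 : 0 ≤ p u * (1 - p u) := mul_nonneg (hp0 u) (by linarith [hple u])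
    have h11 : p u * (1 - p u) ≤ 1 := by nlinarith [hp0 u, hple u]
    have hle : (p u * (1 - p u))^k ≤ p u :=
      le_trans (pow_le_of_le_one h01 h11 (by omega))
        (mul_le_of_le_one_right (hp0 u) (by linarith [hp0 u]))
    calc c k * (p u * (1-p u))^k
        ≤ |c k| * (p u*(1-p u))^k :=
          mul_le_mul_of_nonneg_right (le_abs_self _) (pow_nonneg h01 _)
      _ ≤ |c k| * p u := mul_le_mul_of_nonneg_left hle (abs_nonneg _)
  have hSsummable : Summable S :=
    Summable.of_nonneg_of_le hSnn hSle (hsummable.mul_left _)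
  set G : Ω → ENNReal := fun ω => ∑' u, ENNReal.ofReal (f u ω) with hG
  have hpoint : ∀ ω, ENNReal.ofReal ((⨆ u, |p u - emp X ω u|) ^ m) ≤ G ω := by
    intro ω
    cases isEmpty_or_nonempty 𝒳 with
    | inl h =>
      rw [Real.iSup_of_isEmpty, zero_pow hm0.ne', ENNReal.ofReal_zero]
      exact zero_le
    | inr h =>
      by_cases hGtop : G ω = ⊤
      · rw [hGtop]; exact le_top
      have hbdd : BddAbove (Set.range fun u => |p u - emp X ω u|) :=
        ⟨1, by rintro x ⟨u, rfl⟩; exact habs_le ω u⟩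
      have hfleT : ∀ u, f u ω ≤ (G ω).toReal := by
        intro u
        rw [← ENNReal.ofReal_le_iff_le_toReal hGtop]
        exact ENNReal.le_tsum u
      set t : ℝ := (G ω).toReal ^ ((m:ℝ)⁻¹) with ht
      have htnn : 0 ≤ t := Real.rpow_nonneg ENNReal.toReal_nonneg _
      have htm : t ^ m = (G ω).toReal :=
        Real.rpow_inv_natCast_pow ENNReal.toReal_nonneg hm0.ne'
      have hsuple : (⨆ u, |p u - emp X ω u|) ≤ t := by
        refine ciSup_le fun u => ?_
        have h2 : |p u - emp X ω u| ^ m ≤ t ^ m := htm ▸ hfleT u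
        exact (pow_le_pow_iff_left₀ (abs_nonneg _) htnn hm0.ne').1 h2
      have hsupnn : 0 ≤ ⨆ u, |p u - emp X ω u| :=
        le_trans (abs_nonneg _) (le_ciSup hbdd (Classical.arbitrary 𝒳))
      have hfin : (⨆ u, |p u - emp X ω u|)^m ≤ (G ω).toReal := by
        rw [← htm]; exact pow_le_pow_left₀ hsupnn hsuple m
      calc ENNReal.ofReal ((⨆ u, |p u - emp X ω u|) ^ m)
          ≤ ENNReal.ofReal (G ω).toReal := ENNReal.ofReal_le_ofReal hfin
        _ = G ω := ENNReal.ofReal_toReal hGtop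
  have hR : (0:ℝ) ≤ (1/(n:ℝ)^m) * ∑' u, S u :=
    mul_nonneg hnm.le (tsum_nonneg hSnn)
  by_cases hFint : Integrable (fun ω => (⨆ u, |p u - emp X ω u|) ^ m) (ℙ : Measure Ω)
  swap
  · rw [integral_undef hFint]; exact hR
  rw [integral_eq_lintegral_of_nonneg_ae (ae_of_all _ fun ω => hm.pow_nonneg _)
    hFint.aestronglyMeasurable]
  have hchain : ∫⁻ ω, ENNReal.ofReal ((⨆ u, |p u - emp X ω u|) ^ m) ∂ℙ
      ≤ ENNReal.ofReal ((1/(n:ℝ)^m) * ∑' u, S u) := by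
    calc ∫⁻ ω, ENNReal.ofReal ((⨆ u, |p u - emp X ω u|) ^ m) ∂ℙ
        ≤ ∫⁻ ω, G ω ∂ℙ := lintegral_mono hpoint
      _ = ∑' u, ∫⁻ ω, ENNReal.ofReal (f u ω) ∂ℙ :=
          lintegral_tsum fun u => ((hfmeas u).ennreal_ofReal).aemeasurable
      _ = ∑' u, ENNReal.ofReal ((1/(n:ℝ)^m) * S u) := by
          refine tsum_congr fun u => ?_
          rw [← ofReal_integral_eq_lintegral_ofReal (hfint u)
            (ae_of_all _ fun ω => (hf01 u ω).1), hint u]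
      _ = ENNReal.ofReal (∑' u, (1/(n:ℝ)^m) * S u) :=
          (ENNReal.ofReal_tsum_of_nonneg (fun u => mul_nonneg hnm.le (hSnn u))
            (hSsummable.mul_left _)).symm
      _ = ENNReal.ofReal ((1/(n:ℝ)^m) * ∑' u, S u) := by rw [tsum_mul_left]
  calc (∫⁻ ω, ENNReal.ofReal ((⨆ u, |p u - emp X ω u|) ^ m) ∂ℙ).toReal
      ≤ (ENNReal.ofReal ((1/(n:ℝ)^m) * ∑' u, S u)).toReal :=
        ENNReal.toReal_mono ENNReal.ofReal_ne_top hchain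
    _ = (1/(n:ℝ)^m) * ∑' u, S u := ENNReal.toReal_ofReal hR
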